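/- Let $A$ and $B$ be real skew-symmetric $n \times n$ matrices ($n \geq 1$). Then the Frobenius norm of their commutator satisfies $\|AB - BA\|_F \leq \|A\|_F \, \|B\|_F$. (Equivalently, in the inner product $\langle M, N\rangle = -\tfrac{1}{2}\operatorname{tr}(MN)$ on skew-symmetric matrices, $|[A,B]| \leq \sqrt{2}\,|A|\,|B|$, i.e. the constant $\gamma_0$ for $\mathfrak{so}(n)$ satisfies $\gamma_0 \leq \sqrt{2}$.) -/

import Mathlib

open Matrix

/-- Frobenius norm of a real square matrix. -/
noncomputable def frobNorm {n : ℕ} (M : Matrix (Fin n) (Fin n) ℝ) : ℝ :=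
  Real.sqrt (Matrix.trace (Mᵀ * M))

open Finset

section Helpers

variable {n : ℕ} {H : Matrix (Fin n) (Fin n) ℂ}

noncomputable def sqC {n : ℕ} (X : Matrix (Fin n) (Fin n) ℂ) : ℝ :=
  ∑ j, ∑ k, Complex.normSq (X j k)


lemma sum_two' {n : ℕ} (f : Fin n → ℝ) (h : ∀ i, 0 ≤ f i) {a b : Fin n} (hab : a ≠ b) :
    f a + f b ≤ ∑ i, f i := by
  have := Finset.sum_le_sum_of_subset_of_nonneg (Finset.subset_univ ({a, b} : Finset (Fin n)))
    (fun i _ _ => h i)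
  rwa [Finset.sum_insert (by simp [hab]), Finset.sum_singleton] at this

lemma sum_four' {n : ℕ} (f : Fin n → ℝ) (h : ∀ i, 0 ≤ f i) {a b c e : Fin n}
    (h1 : a ≠ b) (h2 : a ≠ c) (h3 : a ≠ e) (h4 : b ≠ c) (h5 : b ≠ e) (h6 : c ≠ e) :
    f a + f b + f c + f e ≤ ∑ i, f i := by
  have := Finset.sum_le_sum_of_subset_of_nonneg (Finset.subset_univ ({a, b, c, e} : Finset (Fin n)))
    (fun i _ _ => h i)
  rwa [Finset.sum_insert (by simp [h1, h2, h3]), Finset.sum_insert (by simp [h4, h5]),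
    Finset.sum_insert (by simp [h6]), Finset.sum_singleton, ← add_assoc, ← add_assoc] at this

lemma skew_vec_self {n : ℕ} (M : Matrix (Fin n) (Fin n) ℂ) (hM : Mᵀ = -M) (v : Fin n → ℂ) :
    v ⬝ᵥ (M *ᵥ v) = 0 := by
  have key : v ⬝ᵥ (M *ᵥ v) = ∑ a, ∑ b, v a * M a b * v b := by
    simp [dotProduct, mulVec, Finset.mul_sum, mul_assoc]
  have key2 : v ⬝ᵥ (M *ᵥ v) = ∑ a, ∑ b, v b * M b a * v a :=
    key.trans Finset.sum_comm
  have h2 : v ⬝ᵥ (M *ᵥ v) = -(v ⬝ᵥ (M *ᵥ v)) := by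
    nth_rewrite 2 [key]
    rw [key2, ← Finset.sum_neg_distrib]
    refine Finset.sum_congr rfl fun a _ => ?_
    rw [← Finset.sum_neg_distrib]
    refine Finset.sum_congr rfl fun b _ => ?_
    have hba : M b a = -M a b := by
      have := congrFun (congrFun hM a) b
      simpa [Matrix.transpose_apply] using this
    rw [hba]; ring
  have h3 : (2:ℂ) * (v ⬝ᵥ (M *ᵥ v)) = 0 := by linear_combination h2
  simpa using h3

lemma key_ineq {n : ℕ} (d : Fin n → ℝ) (b : Matrix (Fin n) (Fin n) ℂ)
    (hp1 : ∀ j, ∃ k, d k = -d j)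
    (hp2 : ∀ j j', j ≠ j' → d j' = d j → ∃ k k', k ≠ k' ∧ d k = -d j ∧ d k' = -d j)
    (hb0 : ∀ j k, d j ≠ 0 → d k = -d j → (∀ l, d l = d j → l = j) → b j k = 0) :
    ∑ j, ∑ k, (d j - d k)^2 * Complex.normSq (b j k)
      ≤ (∑ j, (d j)^2) * ∑ j, ∑ k, Complex.normSq (b j k) := by
  set S := ∑ j, (d j)^2 with hS
  have hd2 : ∀ i : Fin n, 0 ≤ (d i)^2 := fun i => sq_nonneg _
  have hS0 : 0 ≤ S := Finset.sum_nonneg fun i _ => hd2 i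
  rw [Finset.mul_sum]
  refine Finset.sum_le_sum fun j _ => ?_
  rw [Finset.mul_sum]
  refine Finset.sum_le_sum fun k _ => ?_
  by_cases hbjk : b j k = 0
  · simp [hbjk]
  refine mul_le_mul_of_nonneg_right ?_ (Complex.normSq_nonneg _)
  -- show (d j - d k)^2 ≤ S
  by_cases h1 : d j = d k
  · simpa [h1] using hS0
  by_cases h2 : d k = -d j
  · have hdj : d j ≠ 0 := by
      intro h0; exact h1 (by rw [h0, h2, h0, neg_zero])
    by_cases h3 : ∀ l, d l = d j → l = j
    · exact absurd (hb0 j k hdj h2 h3) hbjk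
    · push_neg at h3
      obtain ⟨l, hl, hlj⟩ := h3
      obtain ⟨k1, k2, hk12, hk1, hk2⟩ := hp2 j l (fun h => hlj h.symm) hl
      have hdjl : d l = d j := hl
      have hne : ∀ m : Fin n, d m = d j → ∀ m', d m' = -d j → m ≠ m' := by
        intro m hm m' hm' hmm'
        rw [hmm'] at hm; rw [hm'] at hm
        exact hdj (by linarith)
      have hsum : (d j)^2 + (d l)^2 + (d k1)^2 + (d k2)^2 ≤ S :=
        sum_four' (fun i => (d i)^2) hd2 (fun h => hlj h.symm)
          (hne j rfl k1 hk1) (hne j rfl k2 hk2) (hne l hl k1 hk1) (hne l hl k2 hk2) hk12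
      rw [hdjl, hk1, hk2] at hsum
      rw [h2]
      nlinarith
  · -- d k ≠ d j, d k ≠ -d j
    by_cases hj0 : d j = 0
    · have hk0 : d k ≠ 0 := fun h => h1 (by rw [hj0, h])
      obtain ⟨k', hk'⟩ := hp1 k
      have hkk' : k' ≠ k := by
        intro h; rw [h] at hk'; exact hk0 (by linarith)
      have h2s : (d k')^2 + (d k)^2 ≤ S := sum_two' (fun i => (d i)^2) hd2 hkk'
      rw [hk'] at h2s
      rw [hj0]
      nlinarith
    · by_cases hk0 : d k = 0
      · obtain ⟨j', hj'⟩ := hp1 j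
        have hjj' : j' ≠ j := by
          intro h; rw [h] at hj'; exact hj0 (by linarith)
        have h2s : (d j')^2 + (d j)^2 ≤ S := sum_two' (fun i => (d i)^2) hd2 hjj'
        rw [hj'] at h2s
        rw [hk0]
        nlinarith
      · obtain ⟨j', hj'⟩ := hp1 j
        obtain ⟨k', hk'⟩ := hp1 k
        have hjj' : j ≠ j' := fun h => hj0 (by rw [← h] at hj'; linarith)
        have hkk' : k ≠ k' := fun h => hk0 (by rw [← h] at hk'; linarith)
        have hjk : j ≠ k := fun h => h1 (by rw [h])
        have hjk' : j ≠ k' := fun h => h2 (by rw [← h] at hk'; linarith)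
        have hj'k : j' ≠ k := fun h => h2 (by rw [h] at hj'; linarith)
        have hj'k' : j' ≠ k' := by
          intro h; rw [h, hk'] at hj'
          exact h1 (by linarith)
        have hsum : (d j)^2 + (d j')^2 + (d k)^2 + (d k')^2 ≤ S :=
          sum_four' (fun i => (d i)^2) hd2 hjj' hjk hjk' hj'k hj'k' hkk'
        rw [hj', hk'] at hsum
        simp only [neg_sq] at hsum
        nlinarith [sq_nonneg (d j + d k)]

lemma star_mulVec_conj (M : Matrix (Fin n) (Fin n) ℂ) (x : Fin n → ℂ) :
    M *ᵥ (star x) = star ((M.map (star : ℂ → ℂ)) *ᵥ x) := by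
  funext i
  simp [mulVec, dotProduct, Pi.star_apply, map_sum]

lemma conj_eig (hconj : H.map (star : ℂ → ℂ) = -H) (x : Fin n → ℂ) (t : ℝ)
    (hx : H *ᵥ x = (t : ℂ) • x) : H *ᵥ (star x) = ((-t : ℝ) : ℂ) • star x := by
  rw [star_mulVec_conj, hconj]
  funext i
  simp only [Matrix.neg_mulVec, hx]
  simp [Pi.star_apply, ← Complex.ofReal_neg]
  ring_nf
  simp [mul_comm]

lemma diag_coords (hH : H.IsHermitian) (x : Fin n → ℂ) (t : ℂ) (hx : H *ᵥ x = t • x) :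
    ∀ l, ((hH.eigenvalues l : ℂ) - t) * ((star (hH.eigenvectorUnitary : Matrix (Fin n) (Fin n) ℂ) *ᵥ x) l) = 0 := by
  intro l
  set U := (hH.eigenvectorUnitary : Matrix (Fin n) (Fin n) ℂ) with hU
  have hU1 : U * star U = 1 := (Matrix.mem_unitaryGroup_iff).mp hH.eigenvectorUnitary.2
  have hdiag : star U * H * U = diagonal (RCLike.ofReal ∘ hH.eigenvalues) :=
    by have := hH.conjStarAlgAut_star_eigenvectorUnitary; rw [Unitary.conjStarAlgAut_star_apply] at this; exact this
  have hcomm : star U * H = diagonal (RCLike.ofReal ∘ hH.eigenvalues) * star U := by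
    calc star U * H = star U * H * (U * star U) := by rw [hU1, mul_one]
      _ = (star U * H * U) * star U := by noncomm_ring
      _ = _ := by rw [hdiag]
  set y := star U *ᵥ x with hy
  have hDy : diagonal (RCLike.ofReal ∘ hH.eigenvalues) *ᵥ y = t • y := by
    rw [hy, mulVec_mulVec, ← hcomm, ← mulVec_mulVec, hx, mulVec_smul]
  have := congrFun hDy l
  simp only [mulVec_diagonal, Pi.smul_apply, smul_eq_mul, Function.comp_apply] at this
  have : (hH.eigenvalues l : ℂ) * y l = t * y l := this
  rw [sub_mul, this, sub_self]

lemma exists_eig (hH : H.IsHermitian) (x : Fin n → ℂ) (hx0 : x ≠ 0) (t : ℂ)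
    (hx : H *ᵥ x = t • x) : ∃ l, (hH.eigenvalues l : ℂ) = t := by
  set U := (hH.eigenvectorUnitary : Matrix (Fin n) (Fin n) ℂ) with hU
  have hU1 : U * star U = 1 := (Matrix.mem_unitaryGroup_iff).mp hH.eigenvectorUnitary.2
  set y := star U *ᵥ x with hy
  have hy0 : y ≠ 0 := by
    intro h
    apply hx0
    have : U *ᵥ y = x := by rw [hy, mulVec_mulVec, hU1, one_mulVec]
    rw [h, mulVec_zero] at this
    exact this.symm
  obtain ⟨l, hl⟩ := Function.ne_iff.mp hy0
  refine ⟨l, ?_⟩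
  have := diag_coords hH x t hx l
  rcases mul_eq_zero.mp this with h | h
  · linear_combination h
  · exact absurd h hl

lemma eig_unique (hH : H.IsHermitian) (k : Fin n)
    (huniq : ∀ l, hH.eigenvalues l = hH.eigenvalues k → l = k)
    (x : Fin n → ℂ) (hx : H *ᵥ x = ((hH.eigenvalues k : ℝ) : ℂ) • x) :
    ∃ c : ℂ, x = c • ⇑(hH.eigenvectorBasis k) := by
  set U := (hH.eigenvectorUnitary : Matrix (Fin n) (Fin n) ℂ) with hU
  have hU1 : U * star U = 1 := (Matrix.mem_unitaryGroup_iff).mp hH.eigenvectorUnitary.2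
  set y := star U *ᵥ x with hy
  have hyl : ∀ l, l ≠ k → y l = 0 := by
    intro l hl
    have hne : (hH.eigenvalues l : ℂ) - (hH.eigenvalues k : ℂ) ≠ 0 := by
      intro h
      apply hl
      apply huniq
      exact_mod_cast sub_eq_zero.mp h
    have := diag_coords hH x _ hx l
    rcases mul_eq_zero.mp this with h | h
    · exact absurd h hne
    · exact h
  have hxy : x = U *ᵥ y := by rw [hy, mulVec_mulVec, hU1, one_mulVec]
  refine ⟨y k, ?_⟩
  have hysingle : y = y k • (Pi.single k 1 : Fin n → ℂ) := by
    funext l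
    by_cases h : l = k
    · subst h; simp
    · simp [hyl l h, Pi.single_apply, h]
  rw [hxy, hysingle, mulVec_smul, hH.eigenvectorUnitary_mulVec]
  simp

lemma sqC_eq_trace {n : ℕ} (X : Matrix (Fin n) (Fin n) ℂ) :
    sqC X = (Matrix.trace (Xᴴ * X)).re := by
  unfold sqC
  rw [Matrix.trace]
  simp only [Matrix.diag_apply, Matrix.mul_apply, Matrix.conjTranspose_apply]
  rw [Complex.re_sum]
  rw [Finset.sum_comm]
  refine Finset.sum_congr rfl fun j _ => ?_
  rw [Complex.re_sum]
  refine Finset.sum_congr rfl fun k _ => ?_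
  simp [Complex.star_def, mul_comm, Complex.mul_conj]

lemma sqC_unitary {n : ℕ} (U X : Matrix (Fin n) (Fin n) ℂ)
    (hU1 : U * star U = 1) (hU2 : star U * U = 1) :
    sqC (star U * X * U) = sqC X := by
  rw [sqC_eq_trace, sqC_eq_trace]
  congr 1
  have h : (star U * X * U)ᴴ = star U * Xᴴ * U := by
    simp [Matrix.conjTranspose_mul, Matrix.star_eq_conjTranspose, Matrix.mul_assoc]
  rw [h]
  calc Matrix.trace (star U * Xᴴ * U * (star U * X * U))
      = Matrix.trace (star U * (Xᴴ * ((U * star U) * (X * U)))) := by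
        congr 1; noncomm_ring
    _ = Matrix.trace (star U * (Xᴴ * (X * U))) := by rw [hU1, one_mul]
    _ = Matrix.trace ((Xᴴ * (X * U)) * star U) := Matrix.trace_mul_comm _ _
    _ = Matrix.trace ((Xᴴ * X) * (U * star U)) := by congr 1; noncomm_ring
    _ = Matrix.trace (Xᴴ * X) := by rw [hU1, Matrix.mul_one]

lemma sqC_map {n : ℕ} (M : Matrix (Fin n) (Fin n) ℝ) :
    sqC (M.map (Complex.ofRealHom : ℝ →+* ℂ)) = Matrix.trace (Mᵀ * M) := by
  unfold sqC
  rw [Matrix.trace]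
  simp only [Matrix.diag_apply, Matrix.mul_apply, Matrix.transpose_apply, Matrix.map_apply]
  rw [Finset.sum_comm]
  refine Finset.sum_congr rfl fun j _ => Finset.sum_congr rfl fun k _ => ?_
  simp [Complex.normSq_ofReal]

lemma trace_transpose_mul_self_nonneg {n : ℕ} (M : Matrix (Fin n) (Fin n) ℝ) :
    0 ≤ Matrix.trace (Mᵀ * M) := by
  rw [Matrix.trace]
  refine Finset.sum_nonneg fun k _ => ?_
  simp only [Matrix.diag_apply, Matrix.mul_apply, Matrix.transpose_apply]
  exact Finset.sum_nonneg fun j _ => mul_self_nonneg _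

lemma sqC_negI_diag {n : ℕ} (d : Fin n → ℝ) :
    sqC ((-Complex.I) • Matrix.diagonal (fun j => ((d j : ℝ) : ℂ))) = ∑ j, (d j)^2 := by
  unfold sqC
  refine Finset.sum_congr rfl fun j _ => ?_
  rw [Finset.sum_eq_single j]
  · simp [Matrix.diagonal_apply_eq, Complex.normSq_mul, Complex.normSq_ofReal]; ring
  · intro k _ hk
    simp [Matrix.diagonal_apply_ne' _ hk]
  · simp

end Helpers

/-- Bourguignon–Lawson commutator estimate: for skew-symmetric matrices,
`‖AB - BA‖_F ≤ ‖A‖_F ‖B‖_F`. -/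
theorem skew_commutator_frobenius_le (n : ℕ) (hn : 1 ≤ n)
    (A B : Matrix (Fin n) (Fin n) ℝ) (hA : Aᵀ = -A) (hB : Bᵀ = -B) :
    frobNorm (A * B - B * A) ≤ frobNorm A * frobNorm B := by
  classical
  set f : ℝ →+* ℂ := Complex.ofRealHom with hf
  set Ac := A.map f with hAc
  set Bc := B.map f with hBc
  set Cc := (A * B - B * A).map f with hCc
  have hCcAB : Cc = Ac * Bc - Bc * Ac := by
    ext i j
    simp [hCc, hAc, hBc, Matrix.map_apply, Matrix.sub_apply, Matrix.mul_apply, map_sum]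
  -- skewness over ℂ
  have hAcT : Acᵀ = -Ac := by
    rw [hAc, ← Matrix.transpose_map, hA]
    ext i j; simp
  have hBcT : Bcᵀ = -Bc := by
    rw [hBc, ← Matrix.transpose_map, hB]
    ext i j; simp
  -- conjugation fixes Ac, Bc
  have hAcConj : Ac.map (star : ℂ → ℂ) = Ac := by
    ext i j
    show star (f (A i j)) = f (A i j)
    exact Complex.conj_ofReal _
  -- Hermitian matrix
  set H := Complex.I • Ac with hH_def
  have hAH : Acᴴ = -Ac := by
    ext i j
    have hji : A j i = -A i j := by
      have := congrFun (congrFun hA i) j; simpa using this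
    show star (f (A j i)) = -(f (A i j))
    rw [show star (f (A j i)) = f (A j i) from Complex.conj_ofReal _, hji]
    simp
  have hH : H.IsHermitian := by
    show Hᴴ = H
    rw [hH_def, Matrix.conjTranspose_smul, hAH, Complex.star_def, Complex.conj_I]
    simp
  have hconj : H.map (star : ℂ → ℂ) = -H := by
    ext i j
    show star (Complex.I * f (A i j)) = -(Complex.I * f (A i j))
    rw [star_mul']
    rw [show star (f (A i j)) = f (A i j) from Complex.conj_ofReal _]
    simp [Complex.conj_I]
  set d := hH.eigenvalues with hd
  set U := (hH.eigenvectorUnitary : Matrix (Fin n) (Fin n) ℂ) with hUdef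
  have hU1 : U * star U = 1 := (Matrix.mem_unitaryGroup_iff).mp hH.eigenvectorUnitary.2
  have hU2 : star U * U = 1 := (Matrix.mem_unitaryGroup_iff').mp hH.eigenvectorUnitary.2
  have hdiag : star U * H * U = Matrix.diagonal (fun j => ((d j : ℝ) : ℂ)) :=
    by have := hH.conjStarAlgAut_star_eigenvectorUnitary; rw [Unitary.conjStarAlgAut_star_apply] at this; exact this
  -- transformed matrices
  set B' := star U * Bc * U with hB'
  set A' := star U * Ac * U with hA'
  have hAcH : Ac = (-Complex.I) • H := by
    rw [hH_def, smul_smul]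
    simp
  have hA'diag : A' = (-Complex.I) • Matrix.diagonal (fun j => ((d j : ℝ) : ℂ)) := by
    rw [hA', hAcH, Matrix.mul_smul, Matrix.smul_mul, hdiag]
  set C' := star U * Cc * U with hC'
  have keymul : ∀ X Y : Matrix (Fin n) (Fin n) ℂ,
      star U * (X * Y) * U = (star U * X * U) * (star U * Y * U) := by
    intro X Y
    calc star U * (X * Y) * U = star U * X * 1 * Y * U := by noncomm_ring
      _ = star U * X * (U * star U) * Y * U := by rw [hU1]
      _ = (star U * X * U) * (star U * Y * U) := by noncomm_ring
  have hC'comm : C' = A' * B' - B' * A' := by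
    rw [hC', hCcAB, Matrix.mul_sub, Matrix.sub_mul, hA', hB', keymul, keymul]
  have hC'entry : ∀ j k, C' j k = (-Complex.I) * (((d j : ℝ) : ℂ) - ((d k : ℝ) : ℂ)) * B' j k := by
    intro j k
    rw [hC'comm, hA'diag]
    simp only [Matrix.sub_apply, Matrix.smul_mul, Matrix.mul_smul, Matrix.smul_apply,
      Matrix.diagonal_mul, Matrix.mul_diagonal, smul_eq_mul]
    ring
  -- eigenvector facts
  have hbasis_eig : ∀ j, H *ᵥ ⇑(hH.eigenvectorBasis j)
      = ((d j : ℝ) : ℂ) • ⇑(hH.eigenvectorBasis j) := by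
    intro j
    rw [hH.mulVec_eigenvectorBasis j]
    funext i
    simp [Complex.real_smul, hd]
  have hbasis_ne : ∀ j, (⇑(hH.eigenvectorBasis j) : Fin n → ℂ) ≠ 0 := by
    intro j hc
    have hz : hH.eigenvectorBasis j = 0 := by
      apply (WithLp.equiv 2 ((i : Fin n) → ℂ)).injective
      simpa using hc
    exact hH.eigenvectorBasis.toBasis.ne_zero j
      ((congrFun hH.eigenvectorBasis.coe_toBasis j).trans hz)
  have hstar_ne : ∀ j, (star ⇑(hH.eigenvectorBasis j) : Fin n → ℂ) ≠ 0 := by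
    intro j hc
    apply hbasis_ne j
    funext i
    have := congrFun hc i
    simp only [Pi.star_apply] at this
    have h0 := star_eq_zero.mp this
    simpa using h0
  -- pairing of eigenvalues
  have hp1 : ∀ j, ∃ k, d k = -d j := by
    intro j
    have h1 := conj_eig hconj _ (d j) (hbasis_eig j)
    obtain ⟨l, hl⟩ := exists_eig hH _ (hstar_ne j) _ h1
    exact ⟨l, by exact_mod_cast hl⟩
  have hp2 : ∀ j j', j ≠ j' → d j' = d j →
      ∃ k k', k ≠ k' ∧ d k = -d j ∧ d k' = -d j := by
    intro j j' hjj' hdj'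
    obtain ⟨k, hk⟩ := hp1 j
    by_contra hcon
    push_neg at hcon
    have huniq : ∀ l, d l = d k → l = k := by
      intro l hl
      by_contra hlk
      exact (hcon l k hlk (by rw [hl, hk])) hk
    have hw := conj_eig hconj _ (d j) (hbasis_eig j)
    rw [show ((-d j : ℝ) : ℂ) = ((d k : ℝ) : ℂ) by exact_mod_cast congrArg Complex.ofReal hk.symm]
      at hw
    obtain ⟨c, hc⟩ := eig_unique hH k huniq _ hw
    have hw'0 := hbasis_eig j'
    rw [hdj'] at hw'0
    have hw' := conj_eig hconj _ (d j) hw'0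
    rw [show ((-d j : ℝ) : ℂ) = ((d k : ℝ) : ℂ) by exact_mod_cast congrArg Complex.ofReal hk.symm]
      at hw'
    obtain ⟨c', hc'⟩ := eig_unique hH k huniq _ hw'
    have hc0 : c ≠ 0 := by
      rintro rfl
      rw [zero_smul] at hc
      exact hstar_ne j hc
    have hc'0 : c' ≠ 0 := by
      rintro rfl
      rw [zero_smul] at hc'
      exact hstar_ne j' hc'
    have hvj : (⇑(hH.eigenvectorBasis j) : Fin n → ℂ)
        = star c • star ⇑(hH.eigenvectorBasis k) := by
      have h0 := congrArg star hc
      rw [star_star] at h0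
      rw [h0, star_smul]
    have hvj' : (⇑(hH.eigenvectorBasis j') : Fin n → ℂ)
        = star c' • star ⇑(hH.eigenvectorBasis k) := by
      have h0 := congrArg star hc'
      rw [star_star] at h0
      rw [h0, star_smul]
    have hvjU : ∀ i, U i j = star c * star (U i k) := by
      intro i
      exact congrFun hvj i
    have hvj'U : ∀ i, U i j' = star c' * star (U i k) := by
      intro i
      exact congrFun hvj' i
    have hcol : ∀ a b : Fin n, (∑ i, star (U i a) * U i b)
        = (1 : Matrix (Fin n) (Fin n) ℂ) a b := by
      intro a b
      rw [← hU2, Matrix.mul_apply]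
      refine Finset.sum_congr rfl fun i _ => ?_
      rw [Matrix.star_apply]
    have horth2 : ∑ i, star (U i j) * U i j' = 0 := by
      rw [hcol j j', Matrix.one_apply_ne hjj']
    have hnorm2 : ∑ i, star (U i k) * U i k = 1 := by
      rw [hcol k k, Matrix.one_apply_eq]
    have hcalc : ∑ i, star (U i j) * U i j'
        = c * star c' * ∑ i, star (U i k) * U i k := by
      rw [Finset.mul_sum]
      refine Finset.sum_congr rfl fun i _ => ?_
      rw [hvjU i, hvj'U i]
      simp only [star_mul', star_star]
      ring
    rw [hcalc, hnorm2, mul_one] at horth2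
    rcases mul_eq_zero.mp horth2 with h | h
    · exact hc0 h
    · exact hc'0 (by simpa using h)
  -- vanishing of the critical entries
  have hb0 : ∀ j k, d j ≠ 0 → d k = -d j → (∀ l, d l = d j → l = j) → B' j k = 0 := by
    intro j k hdj hdk huniq
    have hw := conj_eig hconj _ (d k) (hbasis_eig k)
    rw [show ((-d k : ℝ) : ℂ) = ((d j : ℝ) : ℂ) by
      exact_mod_cast congrArg Complex.ofReal (by rw [hdk]; ring)] at hw
    obtain ⟨c, hc⟩ := eig_unique hH j huniq _ hw
    have hvk : (⇑(hH.eigenvectorBasis k) : Fin n → ℂ)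
        = star c • star ⇑(hH.eigenvectorBasis j) := by
      have h0 := congrArg star hc
      rw [star_star] at h0
      rw [h0, star_smul]
    have hvkU : ∀ i, U i k = star c * star (U i j) := by
      intro i
      exact congrFun hvk i
    set w : Fin n → ℂ := fun i => star (U i j) with hwdef
    have hB'jk : B' j k = star c * (w ⬝ᵥ (Bc *ᵥ w)) := by
      rw [hB', Matrix.mul_assoc, Matrix.mul_apply]
      rw [dotProduct, Finset.mul_sum]
      refine Finset.sum_congr rfl fun a _ => ?_
      rw [Matrix.star_apply, Matrix.mul_apply]
      have hBcU : ∑ b, Bc a b * U b k = star c * (Bc *ᵥ w) a := by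
        rw [mulVec, dotProduct, Finset.mul_sum]
        refine Finset.sum_congr rfl fun b _ => ?_
        rw [hvkU b]
        ring
      rw [hBcU]
      ring
    rw [hB'jk, skew_vec_self Bc hBcT, mul_zero]
  -- norm computations
  have hsqC : sqC Cc = ∑ j, ∑ k, (d j - d k)^2 * Complex.normSq (B' j k) := by
    rw [show sqC Cc = sqC C' from (sqC_unitary U Cc hU1 hU2).symm]
    unfold sqC
    refine Finset.sum_congr rfl fun j _ => Finset.sum_congr rfl fun k _ => ?_
    rw [hC'entry j k, Complex.normSq_mul, Complex.normSq_mul]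
    rw [show ((d j : ℝ) : ℂ) - ((d k : ℝ) : ℂ) = ((d j - d k : ℝ) : ℂ) by push_cast; ring]
    rw [Complex.normSq_ofReal]
    rw [show Complex.normSq (-Complex.I) = 1 by simp]
    ring
  have hsqB : sqC Bc = ∑ j, ∑ k, Complex.normSq (B' j k) :=
    (sqC_unitary U Bc hU1 hU2).symm
  have hsqA : sqC Ac = ∑ j, (d j)^2 := by
    rw [show sqC Ac = sqC A' from (sqC_unitary U Ac hU1 hU2).symm, hA'diag]
    exact sqC_negI_diag d
  have main : sqC Cc ≤ sqC Ac * sqC Bc := by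
    rw [hsqC, hsqA, hsqB]
    exact key_ineq d B' hp1 hp2 hb0
  have h1 : Matrix.trace ((A * B - B * A)ᵀ * (A * B - B * A))
      ≤ Matrix.trace (Aᵀ * A) * Matrix.trace (Bᵀ * B) := by
    rw [← sqC_map (A * B - B * A), ← sqC_map A, ← sqC_map B]
    exact main
  unfold frobNorm
  rw [← Real.sqrt_mul (trace_transpose_mul_self_nonneg A)]
  exact Real.sqrt_le_sqrt h1
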